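/- For every integer m ≥ 1, the group P′_{8·3^m}, i.e. the presented group ⟨x, y, z ∣ x² = (xy)² = y², zxz⁻¹ = y, zyz⁻¹ = xy, z^{3^m} = 1⟩ (the quotient of the free group on three generators x, y, z by the normal closure of the relators x²((xy)²)⁻¹, (xy)²y⁻², zxz⁻¹y⁻¹, zyz⁻¹(xy)⁻¹, z^{3^m}), has Grossman's Property A. -/

import Mathlib

/-- A group `G` has Grossman's Property A if every class-preserving automorphism
(i.e. one sending each element to a conjugate of itself) is inner. -/
def HasPropertyA (G : Type*) [Group G] : Prop :=
  ∀ φ : G ≃* G, (∀ g : G, IsConj g (φ g)) → ∃ h : G, ∀ g : G, φ g = h * g * h⁻¹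

/-- The relators of the group
`P′_{8·3^m} = ⟨x, y, z ∣ x² = (xy)² = y², zxz⁻¹ = y, zyz⁻¹ = xy, z^{3^m} = 1⟩`,
where `x`, `y`, `z` are the generators `0`, `1`, `2`. -/
def PPrimeRels (m : ℕ) : Set (FreeGroup (Fin 3)) :=
  let x : FreeGroup (Fin 3) := FreeGroup.of 0
  let y : FreeGroup (Fin 3) := FreeGroup.of 1
  let z : FreeGroup (Fin 3) := FreeGroup.of 2
  {x ^ 2 * ((x * y) ^ 2)⁻¹, (x * y) ^ 2 * (y ^ 2)⁻¹,
    z * x * z⁻¹ * y⁻¹, z * y * z⁻¹ * (x * y)⁻¹, z ^ (3 ^ m)}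

set_option maxHeartbeats 2000000 in
theorem PPrime_propertyA : ∀ m : ℕ, 1 ≤ m →
    HasPropertyA (PresentedGroup (PPrimeRels m)) := by
  intro m _ φ hφ
  obtain ⟨x, y, z, hx, hy, hz⟩ :
      ∃ x y z : PresentedGroup (PPrimeRels m), x = PresentedGroup.of 0 ∧
        y = PresentedGroup.of 1 ∧ z = PresentedGroup.of 2 := ⟨_, _, _, rfl, rfl, rfl⟩
  have hmk : ∀ r ∈ PPrimeRels m, PresentedGroup.mk (PPrimeRels m) r = 1 := by
    intro r hr
    exact (QuotientGroup.eq_one_iff r).2 (Subgroup.subset_normalClosure hr)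
  have hA : x ^ 2 = (x * y) ^ 2 := by
    have h := hmk (FreeGroup.of 0 ^ 2 * ((FreeGroup.of 0 * FreeGroup.of 1) ^ 2)⁻¹)
      (by simp [PPrimeRels])
    rw [map_mul, map_inv, map_pow, map_pow, map_mul, mul_inv_eq_one] at h
    rw [hx, hy]; exact h
  have hB : (x * y) ^ 2 = y ^ 2 := by
    have h := hmk ((FreeGroup.of 0 * FreeGroup.of 1) ^ 2 *
        ((FreeGroup.of 1 : FreeGroup (Fin 3)) ^ 2)⁻¹) (by simp [PPrimeRels])
    rw [map_mul, map_inv, map_pow, map_pow, map_mul, mul_inv_eq_one] at h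
    rw [hx, hy]; exact h
  have hC : z * x * z⁻¹ = y := by
    have h := hmk (FreeGroup.of 2 * FreeGroup.of 0 * (FreeGroup.of 2)⁻¹ * (FreeGroup.of 1)⁻¹)
      (by simp [PPrimeRels])
    rw [map_mul, map_mul, map_mul, map_inv, map_inv, mul_inv_eq_one] at h
    rw [hx, hy, hz]; exact h
  have hD : z * y * z⁻¹ = x * y := by
    have h := hmk (FreeGroup.of 2 * FreeGroup.of 1 * (FreeGroup.of 2)⁻¹ *
        (FreeGroup.of 0 * FreeGroup.of 1)⁻¹) (by simp [PPrimeRels])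
    rw [map_mul, map_mul, map_mul, map_inv, map_inv, map_mul, mul_inv_eq_one] at h
    rw [hx, hy, hz]; exact h
  -- basic consequences
  have r3 : x * x = y * y := by
    have := hA.trans hB
    simpa [pow_two] using this
  have r1 : x * y * x = y := by
    have h : (x * y) * (x * y) = y * y := by simpa [pow_two] using hB
    have h2 : (x * y * x) * y = y * y := by rw [← h]; group
    exact mul_right_cancel h2
  have r2 : y * x * y = x := by
    have h : x * (y * x * y) = x * x := by
      have h' : (x * y) * (x * y) = x * x := by simpa [pow_two] using hA.symm
      rw [← h']; group
    exact mul_left_cancel h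
  have d1 : x * y = y * x⁻¹ := by
    rw [eq_mul_inv_iff_mul_eq]; exact r1
  have d2 : y * x = x * y⁻¹ := by
    rw [eq_mul_inv_iff_mul_eq]; exact r2
  have r4 : x * x * x * x = 1 := by
    calc x * x * x * x = x * (x * x) * x := by group
    _ = x * (y * y) * x := by rw [r3]
    _ = (x * y) * (y * x) := by group
    _ = (y * x⁻¹) * (x * y⁻¹) := by rw [← d1, ← d2]
    _ = 1 := by group
  have r5 : z * x = y * z := by rw [← hC]; group
  have r6 : z * y = (x * y) * z := by rw [← hD]; group
  -- the central element c and the rewrite system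
  obtain ⟨c, hc⟩ : ∃ c : PresentedGroup (PPrimeRels m), c = x * x := ⟨_, rfl⟩
  have R2 : x * x = c := hc.symm
  have R3 : y * y = c := by rw [hc]; exact r3.symm
  have R6 : c * c = 1 := by
    calc c * c = x * x * x * x := by rw [hc]; group
    _ = 1 := r4
  have hyinv : y⁻¹ = y * c := by
    symm
    rw [eq_inv_iff_mul_eq_one]
    calc y * c * y = y * (y * y) * y := by rw [← R3]
    _ = (y * y) * (y * y) := by group
    _ = c * c := by rw [R3]
    _ = 1 := R6
  have R1 : y * x = x * (y * c) := by
    rw [d2, hyinv]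
  have R4 : c * x = x * c := by rw [hc]; group
  have R5 : c * y = y * c := by rw [← R3]; group
  have R7 : z * x = y * z := r5
  have R8 : z * y = x * (y * z) := by rw [r6]; group
  -- primed (context) versions
  have R1' : ∀ t, y * (x * t) = x * (y * (c * t)) := by
    intro t; rw [← mul_assoc, R1]; group
  have R2' : ∀ t, x * (x * t) = c * t := by
    intro t; rw [← mul_assoc, R2]
  have R3' : ∀ t, y * (y * t) = c * t := by
    intro t; rw [← mul_assoc, R3]
  have R4' : ∀ t, c * (x * t) = x * (c * t) := by
    intro t; rw [← mul_assoc, R4]; group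
  have R5' : ∀ t, c * (y * t) = y * (c * t) := by
    intro t; rw [← mul_assoc, R5]; group
  have R6' : ∀ t, c * (c * t) = t := by
    intro t; rw [← mul_assoc, R6]; group
  have R7' : ∀ t, z * (x * t) = y * (z * t) := by
    intro t; rw [← mul_assoc, R7]; group
  have R8' : ∀ t, z * (y * t) = x * (y * (z * t)) := by
    intro t; rw [← mul_assoc, R8]; group
  have R9 : z * c = c * z := by
    rw [hc, ← mul_assoc, R7, mul_assoc, R7, ← mul_assoc, R3, R2]
  have R9' : ∀ t, z * (c * t) = c * (z * t) := by
    intro t; rw [← mul_assoc, R9]; group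
  -- the candidate conjugacy class of x
  let P : PresentedGroup (PPrimeRels m) → Prop := fun w =>
    w = x ∨ w = x * c ∨ w = y ∨ w = y * c ∨ w = x * y ∨ w = x * y * c
  have p1 : P x := Or.inl rfl
  have p2 : P (x * c) := Or.inr (Or.inl rfl)
  have p3 : P y := Or.inr (Or.inr (Or.inl rfl))
  have p4 : P (y * c) := Or.inr (Or.inr (Or.inr (Or.inl rfl)))
  have p5 : P (x * y) := Or.inr (Or.inr (Or.inr (Or.inr (Or.inl rfl))))
  have p6 : P (x * y * c) := Or.inr (Or.inr (Or.inr (Or.inr (Or.inr rfl))))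
  -- generic transfer of the conjugation tables
  have gen_mem : ∀ s, (∀ w, P w → ∃ w', P w' ∧ s * w = w' * s) →
      (∀ w', P w' → ∃ w, P w ∧ s * w = w' * s) →
      ∀ w, P w ↔ P (s * w * s⁻¹) := by
    intro s hf hb w
    constructor
    · intro hw
      obtain ⟨w', hw', he⟩ := hf w hw
      have h1 : s * w * s⁻¹ = w' := by rw [he]; group
      rw [h1]; exact hw'
    · intro hw'
      obtain ⟨w0, hw0, he⟩ := hb (s * w * s⁻¹) hw'
      have h2 : s * w0 = s * w := by rw [he]; group
      have h3 : w0 = w := mul_left_cancel h2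
      rw [← h3]; exact hw0
  have hx_mem : ∀ w, P w ↔ P (x * w * x⁻¹) := by
    apply gen_mem x
    · intro w hw
      rcases hw with h | h | h | h | h | h
      · exact ⟨x, p1, by rw [h]⟩
      · exact ⟨x * c, p2, by rw [h]; simp only [mul_assoc, R1, R1', R2, R2', R3, R3', R4, R4',
          R5, R5', R6, R6', R7, R7', R8, R8', R9, R9', mul_one, one_mul]⟩
      · exact ⟨y * c, p4, by rw [h]; simp only [mul_assoc, R1, R1', R2, R2', R3, R3', R4, R4',
          R5, R5', R6, R6', R7, R7', R8, R8', R9, R9', mul_one, one_mul]⟩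
      · exact ⟨y, p3, by rw [h]; simp only [mul_assoc, R1, R1', R2, R2', R3, R3', R4, R4',
          R5, R5', R6, R6', R7, R7', R8, R8', R9, R9', mul_one, one_mul]⟩
      · exact ⟨x * y * c, p6, by rw [h]; simp only [mul_assoc, R1, R1', R2, R2', R3, R3', R4, R4',
          R5, R5', R6, R6', R7, R7', R8, R8', R9, R9', mul_one, one_mul]⟩
      · exact ⟨x * y, p5, by rw [h]; simp only [mul_assoc, R1, R1', R2, R2', R3, R3', R4, R4',
          R5, R5', R6, R6', R7, R7', R8, R8', R9, R9', mul_one, one_mul]⟩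
    · intro w' hw'
      rcases hw' with h | h | h | h | h | h
      · exact ⟨x, p1, by rw [h]⟩
      · exact ⟨x * c, p2, by rw [h]; simp only [mul_assoc, R1, R1', R2, R2', R3, R3', R4, R4',
          R5, R5', R6, R6', R7, R7', R8, R8', R9, R9', mul_one, one_mul]⟩
      · exact ⟨y * c, p4, by rw [h]; simp only [mul_assoc, R1, R1', R2, R2', R3, R3', R4, R4',
          R5, R5', R6, R6', R7, R7', R8, R8', R9, R9', mul_one, one_mul]⟩
      · exact ⟨y, p3, by rw [h]; simp only [mul_assoc, R1, R1', R2, R2', R3, R3', R4, R4',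
          R5, R5', R6, R6', R7, R7', R8, R8', R9, R9', mul_one, one_mul]⟩
      · exact ⟨x * y * c, p6, by rw [h]; simp only [mul_assoc, R1, R1', R2, R2', R3, R3', R4, R4',
          R5, R5', R6, R6', R7, R7', R8, R8', R9, R9', mul_one, one_mul]⟩
      · exact ⟨x * y, p5, by rw [h]; simp only [mul_assoc, R1, R1', R2, R2', R3, R3', R4, R4',
          R5, R5', R6, R6', R7, R7', R8, R8', R9, R9', mul_one, one_mul]⟩
  have hy_mem : ∀ w, P w ↔ P (y * w * y⁻¹) := by
    apply gen_mem y
    · intro w hw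
      rcases hw with h | h | h | h | h | h
      · exact ⟨x * c, p2, by rw [h]; simp only [mul_assoc, R1, R1', R2, R2', R3, R3', R4, R4',
          R5, R5', R6, R6', R7, R7', R8, R8', R9, R9', mul_one, one_mul]⟩
      · exact ⟨x, p1, by rw [h]; simp only [mul_assoc, R1, R1', R2, R2', R3, R3', R4, R4',
          R5, R5', R6, R6', R7, R7', R8, R8', R9, R9', mul_one, one_mul]⟩
      · exact ⟨y, p3, by rw [h]⟩
      · exact ⟨y * c, p4, by rw [h]; simp only [mul_assoc, R1, R1', R2, R2', R3, R3', R4, R4',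
          R5, R5', R6, R6', R7, R7', R8, R8', R9, R9', mul_one, one_mul]⟩
      · exact ⟨x * y * c, p6, by rw [h]; simp only [mul_assoc, R1, R1', R2, R2', R3, R3', R4, R4',
          R5, R5', R6, R6', R7, R7', R8, R8', R9, R9', mul_one, one_mul]⟩
      · exact ⟨x * y, p5, by rw [h]; simp only [mul_assoc, R1, R1', R2, R2', R3, R3', R4, R4',
          R5, R5', R6, R6', R7, R7', R8, R8', R9, R9', mul_one, one_mul]⟩
    · intro w' hw'
      rcases hw' with h | h | h | h | h | h
      · exact ⟨x * c, p2, by rw [h]; simp only [mul_assoc, R1, R1', R2, R2', R3, R3', R4, R4',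
          R5, R5', R6, R6', R7, R7', R8, R8', R9, R9', mul_one, one_mul]⟩
      · exact ⟨x, p1, by rw [h]; simp only [mul_assoc, R1, R1', R2, R2', R3, R3', R4, R4',
          R5, R5', R6, R6', R7, R7', R8, R8', R9, R9', mul_one, one_mul]⟩
      · exact ⟨y, p3, by rw [h]⟩
      · exact ⟨y * c, p4, by rw [h]; simp only [mul_assoc, R1, R1', R2, R2', R3, R3', R4, R4',
          R5, R5', R6, R6', R7, R7', R8, R8', R9, R9', mul_one, one_mul]⟩
      · exact ⟨x * y * c, p6, by rw [h]; simp only [mul_assoc, R1, R1', R2, R2', R3, R3', R4, R4',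
          R5, R5', R6, R6', R7, R7', R8, R8', R9, R9', mul_one, one_mul]⟩
      · exact ⟨x * y, p5, by rw [h]; simp only [mul_assoc, R1, R1', R2, R2', R3, R3', R4, R4',
          R5, R5', R6, R6', R7, R7', R8, R8', R9, R9', mul_one, one_mul]⟩
  have hz_mem : ∀ w, P w ↔ P (z * w * z⁻¹) := by
    apply gen_mem z
    · intro w hw
      rcases hw with h | h | h | h | h | h
      · exact ⟨y, p3, by rw [h]; simp only [mul_assoc, R1, R1', R2, R2', R3, R3', R4, R4',
          R5, R5', R6, R6', R7, R7', R8, R8', R9, R9', mul_one, one_mul]⟩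
      · exact ⟨y * c, p4, by rw [h]; simp only [mul_assoc, R1, R1', R2, R2', R3, R3', R4, R4',
          R5, R5', R6, R6', R7, R7', R8, R8', R9, R9', mul_one, one_mul]⟩
      · exact ⟨x * y, p5, by rw [h]; simp only [mul_assoc, R1, R1', R2, R2', R3, R3', R4, R4',
          R5, R5', R6, R6', R7, R7', R8, R8', R9, R9', mul_one, one_mul]⟩
      · exact ⟨x * y * c, p6, by rw [h]; simp only [mul_assoc, R1, R1', R2, R2', R3, R3', R4, R4',
          R5, R5', R6, R6', R7, R7', R8, R8', R9, R9', mul_one, one_mul]⟩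
      · exact ⟨x, p1, by rw [h]; simp only [mul_assoc, R1, R1', R2, R2', R3, R3', R4, R4',
          R5, R5', R6, R6', R7, R7', R8, R8', R9, R9', mul_one, one_mul]⟩
      · exact ⟨x * c, p2, by rw [h]; simp only [mul_assoc, R1, R1', R2, R2', R3, R3', R4, R4',
          R5, R5', R6, R6', R7, R7', R8, R8', R9, R9', mul_one, one_mul]⟩
    · intro w' hw'
      rcases hw' with h | h | h | h | h | h
      · exact ⟨x * y, p5, by rw [h]; simp only [mul_assoc, R1, R1', R2, R2', R3, R3', R4, R4',
          R5, R5', R6, R6', R7, R7', R8, R8', R9, R9', mul_one, one_mul]⟩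
      · exact ⟨x * y * c, p6, by rw [h]; simp only [mul_assoc, R1, R1', R2, R2', R3, R3', R4, R4',
          R5, R5', R6, R6', R7, R7', R8, R8', R9, R9', mul_one, one_mul]⟩
      · exact ⟨x, p1, by rw [h]; simp only [mul_assoc, R1, R1', R2, R2', R3, R3', R4, R4',
          R5, R5', R6, R6', R7, R7', R8, R8', R9, R9', mul_one, one_mul]⟩
      · exact ⟨x * c, p2, by rw [h]; simp only [mul_assoc, R1, R1', R2, R2', R3, R3', R4, R4',
          R5, R5', R6, R6', R7, R7', R8, R8', R9, R9', mul_one, one_mul]⟩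
      · exact ⟨y, p3, by rw [h]; simp only [mul_assoc, R1, R1', R2, R2', R3, R3', R4, R4',
          R5, R5', R6, R6', R7, R7', R8, R8', R9, R9', mul_one, one_mul]⟩
      · exact ⟨y * c, p4, by rw [h]; simp only [mul_assoc, R1, R1', R2, R2', R3, R3', R4, R4',
          R5, R5', R6, R6', R7, R7', R8, R8', R9, R9', mul_one, one_mul]⟩
  -- the subgroup of elements preserving P under conjugation
  let H : Subgroup (PresentedGroup (PPrimeRels m)) :=
    { carrier := {g | ∀ w, P w ↔ P (g * w * g⁻¹)}
      one_mem' := by intro w; simp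
      mul_mem' := by
        intro a b ha hb w
        rw [show (a * b) * w * (a * b)⁻¹ = a * (b * w * b⁻¹) * a⁻¹ by group]
        exact (hb w).trans (ha _)
      inv_mem' := by
        intro a ha w
        have h1 := ha (a⁻¹ * w * a)
        rw [show a * (a⁻¹ * w * a) * a⁻¹ = w by group] at h1
        rw [inv_inv]
        exact h1.symm }
  have key : ∀ g w, P w → P (g * w * g⁻¹) := by
    intro g w hw
    have hg : g ∈ H := by
      apply PresentedGroup.generated_by (PPrimeRels m) H
      intro j
      fin_cases j
      · show (PresentedGroup.of 0 : PresentedGroup (PPrimeRels m)) ∈ H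
        rw [← hx]; exact hx_mem
      · show (PresentedGroup.of 1 : PresentedGroup (PPrimeRels m)) ∈ H
        rw [← hy]; exact hy_mem
      · show (PresentedGroup.of 2 : PresentedGroup (PPrimeRels m)) ∈ H
        rw [← hz]; exact hz_mem
    exact (hg w).mp hw
  -- set up the class preserving automorphism
  obtain ⟨k, hk⟩ := isConj_iff.mp (hφ z)
  obtain ⟨g, hg⟩ := isConj_iff.mp (hφ x)
  obtain ⟨u, hφx, hu, hφy, hcons⟩ : ∃ u, φ x = k * u * k⁻¹ ∧ P u ∧
      φ y = k * (z * u * z⁻¹) * k⁻¹ ∧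
      u * (z * u * z⁻¹) = z * (z * u * z⁻¹) * z⁻¹ := by
    refine ⟨k⁻¹ * φ x * k, by group, ?_, ?_, ?_⟩
    · have h1 : k⁻¹ * φ x * k = (k⁻¹ * g) * x * (k⁻¹ * g)⁻¹ := by
        rw [← hg]; group
      rw [h1]; exact key _ x p1
    · have h1 : φ y = φ z * φ x * (φ z)⁻¹ := by
        rw [show y = z * x * z⁻¹ from hC.symm, map_mul, map_mul, map_inv]
      rw [h1, ← hk]; group
    · have h1 : φ (x * y) = φ x * φ y := map_mul φ x y
      have h2 : φ (x * y) = φ z * φ y * (φ z)⁻¹ := by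
        rw [show x * y = z * y * z⁻¹ from hD.symm, map_mul, map_mul, map_inv]
      have h3 : φ y = φ z * φ x * (φ z)⁻¹ := by
        rw [show y = z * x * z⁻¹ from hC.symm, map_mul, map_mul, map_inv]
      have h4 := h1.symm.trans h2
      rw [h3, ← hk] at h4
      have h5 : k * ((k⁻¹ * φ x * k) * (z * (k⁻¹ * φ x * k) * z⁻¹)) * k⁻¹ =
          k * (z * (z * (k⁻¹ * φ x * k) * z⁻¹) * z⁻¹) * k⁻¹ := by
        calc k * ((k⁻¹ * φ x * k) * (z * (k⁻¹ * φ x * k) * z⁻¹)) * k⁻¹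
            = φ x * (k * z * k⁻¹ * φ x * (k * z * k⁻¹)⁻¹) := by group
        _ = k * z * k⁻¹ * (k * z * k⁻¹ * φ x * (k * z * k⁻¹)⁻¹) * (k * z * k⁻¹)⁻¹ := h4
        _ = k * (z * (z * (k⁻¹ * φ x * k) * z⁻¹) * z⁻¹) * k⁻¹ := by group
      exact mul_left_cancel (mul_right_cancel h5)
  have hφz : φ z = k * z * k⁻¹ := hk.symm
  -- find t with t * x * t⁻¹ = u and z * t = t * z
  obtain ⟨t, ht1, ht2⟩ : ∃ t, z * t = t * z ∧ t * x * t⁻¹ = u := by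
    have hzxc : z * (x * c) * z⁻¹ = y * c := by
      rw [show z * (x * c) = (y * c) * z by
        simp only [mul_assoc, R1, R1', R2, R2', R3, R3', R4, R4', R5, R5',
          R6, R6', R7, R7', R8, R8', R9, R9', mul_one, one_mul]]
      group
    have hzyc : z * (y * c) * z⁻¹ = x * y * c := by
      rw [show z * (y * c) = (x * y * c) * z by
        simp only [mul_assoc, R1, R1', R2, R2', R3, R3', R4, R4', R5, R5',
          R6, R6', R7, R7', R8, R8', R9, R9', mul_one, one_mul]]
      group
    have hzxyc : z * (x * y * c) * z⁻¹ = x * c := by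
      rw [show z * (x * y * c) = (x * c) * z by
        simp only [mul_assoc, R1, R1', R2, R2', R3, R3', R4, R4', R5, R5',
          R6, R6', R7, R7', R8, R8', R9, R9', mul_one, one_mul]]
      group
    rcases hu with h | h | h | h | h | h
    · exact ⟨1, by group, by rw [h]; group⟩
    · -- u = x * c : derive c = 1
      rw [h] at hcons ⊢
      rw [hzxc, hzyc] at hcons
      have hxy : (x * c) * (y * c) = (x * y) * 1 := by
        simp only [mul_assoc, R1, R1', R2, R2', R3, R3', R4, R4', R5, R5',
          R6, R6', R7, R7', R8, R8', R9, R9', mul_one, one_mul]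
      rw [hxy] at hcons
      have hc1 : (1 : PresentedGroup (PPrimeRels m)) = c := mul_left_cancel hcons
      exact ⟨1, by group, by rw [← hc1]; group⟩
    · exact ⟨z, rfl, by rw [h]; exact hC⟩
    · -- u = y * c : derive c = 1
      rw [h] at hcons ⊢
      rw [hzyc, hzxyc] at hcons
      have hxy : (y * c) * (x * y * c) = x * 1 := by
        simp only [mul_assoc, R1, R1', R2, R2', R3, R3', R4, R4', R5, R5',
          R6, R6', R7, R7', R8, R8', R9, R9', mul_one, one_mul]
      rw [hxy] at hcons
      have hc1 : (1 : PresentedGroup (PPrimeRels m)) = c := mul_left_cancel hcons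
      refine ⟨z, rfl, ?_⟩
      rw [hC, ← hc1, mul_one]
    · refine ⟨z * z, by group, ?_⟩
      rw [h, show (z * z) * x * (z * z)⁻¹ = z * (z * x * z⁻¹) * z⁻¹ by group, hC, hD]
    · -- u = x * y * c : derive c = 1
      rw [h] at hcons ⊢
      rw [hzxyc, hzxc] at hcons
      have hxy : (x * y * c) * (x * c) = y * 1 := by
        simp only [mul_assoc, R1, R1', R2, R2', R3, R3', R4, R4', R5, R5',
          R6, R6', R7, R7', R8, R8', R9, R9', mul_one, one_mul]
      rw [hxy] at hcons
      have hc1 : (1 : PresentedGroup (PPrimeRels m)) = c := mul_left_cancel hcons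
      refine ⟨z * z, by group, ?_⟩
      rw [show (z * z) * x * (z * z)⁻¹ = z * (z * x * z⁻¹) * z⁻¹ by group, hC, hD, ← hc1, mul_one]
  -- conclude
  have hinv : t⁻¹ * z⁻¹ = z⁻¹ * t⁻¹ := by
    have h := congrArg (fun a => a⁻¹) ht1
    simpa [mul_inv_rev] using h
  have swap : z * (t * x * t⁻¹) * z⁻¹ = t * (z * x * z⁻¹) * t⁻¹ := by
    calc z * (t * x * t⁻¹) * z⁻¹ = (z * t) * x * (t⁻¹ * z⁻¹) := by group
    _ = (t * z) * x * (z⁻¹ * t⁻¹) := by rw [ht1, hinv]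
    _ = t * (z * x * z⁻¹) * t⁻¹ := by group
  have hofs : ∀ i : Fin 3, φ (PresentedGroup.of i) =
      (k * t) * PresentedGroup.of i * (k * t)⁻¹ := by
    have h0 : φ (PresentedGroup.of 0) = (k * t) * PresentedGroup.of 0 * (k * t)⁻¹ := by
      rw [← hx, hφx, ← ht2]; group
    have h1 : φ (PresentedGroup.of 1) = (k * t) * PresentedGroup.of 1 * (k * t)⁻¹ := by
      rw [← hy, hφy, ← ht2, swap, hC]; group
    have h2 : φ (PresentedGroup.of 2) = (k * t) * PresentedGroup.of 2 * (k * t)⁻¹ := by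
      rw [← hz, hφz, show (k * t) * z * (k * t)⁻¹ = k * (t * z * t⁻¹) * k⁻¹ by group,
        show t * z * t⁻¹ = z by rw [← ht1]; group]
    intro i
    fin_cases i
    · exact h0
    · exact h1
    · exact h2
  refine ⟨k * t, fun a => ?_⟩
  have hhom : (φ : PresentedGroup (PPrimeRels m) →* PresentedGroup (PPrimeRels m)) =
      ((MulAut.conj (k * t) : PresentedGroup (PPrimeRels m) ≃* PresentedGroup (PPrimeRels m)) :
        PresentedGroup (PPrimeRels m) →* PresentedGroup (PPrimeRels m)) := by
    apply PresentedGroup.ext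
    intro i
    simpa using (hofs i).trans
      (by group : (k * t) * PresentedGroup.of i * (k * t)⁻¹ =
        k * (t * PresentedGroup.of i * t⁻¹) * k⁻¹)
  have h2 := DFunLike.congr_fun hhom a
  have h3 : φ a = k * (t * a * t⁻¹) * k⁻¹ := by simpa using h2
  rw [h3]; group
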